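/- Let α₀, δ be coprime Gaussian integers with δ = c + di, gcd(c,d) = 1, and let α_k = α₀ + k·δ. Suppose μ₁, …, μ_r are Gaussian integers each dividing some element of the sequence (α_k), such that ν(μ₁), …, ν(μ_r) are pairwise coprime positive integers. Given any b₁, …, b_r ∈ ℤ, there exists t ∈ ℤ, unique modulo ν(μ₁)···ν(μ_r), such that μ_j divides α_{t + b_j} for all 1 ≤ j ≤ r. -/

import Mathlib

/-- ν(x+iy) = (x²+y²)/gcd(x,y) for a Gaussian integer. -/
def nu (β : GaussianInt) : ℤ := (β.re ^ 2 + β.im ^ 2) / Int.gcd β.re β.im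

/-- Key lemma: if `μ` divides some point of a primitive line, then `μ ∣ n·δ ↔ ν(μ) ∣ n`. -/
lemma mu_dvd_iff (α₀ δ : GaussianInt) (h : IsCoprime α₀ δ) (μ : GaussianInt)
    (hpos : 0 < nu μ) (k : ℤ) (hk : μ ∣ α₀ + (k : GaussianInt) * δ) (n : ℤ) :
    μ ∣ (n : GaussianInt) * δ ↔ nu μ ∣ n := by
  have ha0 : ((Int.gcd μ.re μ.im : ℤ)) ∣ μ.re := Int.gcd_dvd_left μ.re μ.im
  have hb0 : ((Int.gcd μ.re μ.im : ℤ)) ∣ μ.im := Int.gcd_dvd_right μ.re μ.im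
  obtain ⟨a, ha⟩ := ha0
  obtain ⟨b, hb⟩ := hb0
  set g : ℤ := (Int.gcd μ.re μ.im : ℤ) with hgdef
  have hg0 : g ≠ 0 := by
    intro h0
    rw [nu, ← hgdef, h0, Int.ediv_zero] at hpos
    exact lt_irrefl 0 hpos
  have hnu : nu μ = g * (a ^ 2 + b ^ 2) := by
    have hsum : μ.re ^ 2 + μ.im ^ 2 = g * (g * (a ^ 2 + b ^ 2)) := by
      rw [ha, hb]; ring
    rw [nu, ← hgdef, hsum, Int.mul_ediv_cancel_left _ hg0]
  have hab : Int.gcd a b = 1 := by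
    have h1 : Int.gcd (g * a) (g * b) = g.natAbs * Int.gcd a b := Int.gcd_mul_left g a b
    rw [← ha, ← hb] at h1
    have h2 : g.natAbs = Int.gcd μ.re μ.im := by
      rw [hgdef, Int.natAbs_natCast]
    rw [← h2] at h1
    have h3 : g.natAbs ≠ 0 := fun hn => hg0 (Int.natAbs_eq_zero.mp hn)
    nlinarith [Nat.pos_of_ne_zero h3, h1, Nat.le_of_eq h1]
  constructor
  · intro hd
    -- μ divides the rational integer n
    have hk' : μ ∣ α₀ + δ * (k : GaussianInt) := by rwa [mul_comm] at hk
    obtain ⟨u, v, huv⟩ := h.add_mul_left_left (k : GaussianInt)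
    have hμn : μ ∣ (n : GaussianInt) := by
      have heq : (n : GaussianInt) =
          (n : GaussianInt) * u * (α₀ + δ * (k : GaussianInt)) + v * ((n : GaussianInt) * δ) := by
        linear_combination (-(n : GaussianInt)) * huv
      rw [heq]
      exact dvd_add (Dvd.dvd.mul_left hk' _) (hd.mul_left v)
    obtain ⟨q, hq⟩ := hμn
    -- multiply by the conjugate
    have hnorm : Zsqrtd.norm μ = μ.re ^ 2 + μ.im ^ 2 := by rw [Zsqrtd.norm_def]; ring
    have hmulstar : μ * star μ = ((μ.re ^ 2 + μ.im ^ 2 : ℤ) : GaussianInt) := by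
      rw [← hnorm, Zsqrtd.norm_eq_mul_conj]
    have hdvd2 : ((μ.re ^ 2 + μ.im ^ 2 : ℤ) : GaussianInt) ∣ (n : GaussianInt) * star μ := by
      refine ⟨q, ?_⟩
      rw [← hmulstar, hq]; ring
    rw [Zsqrtd.intCast_dvd] at hdvd2
    obtain ⟨hre, him⟩ := hdvd2
    have hre' : (μ.re ^ 2 + μ.im ^ 2) ∣ n * μ.re := by
      have : ((n : GaussianInt) * star μ).re = n * μ.re := by
        simp [Zsqrtd.re_mul, Zsqrtd.re_star, Zsqrtd.im_star]
      rwa [this] at hre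
    have him' : (μ.re ^ 2 + μ.im ^ 2) ∣ n * μ.im := by
      have : ((n : GaussianInt) * star μ).im = -(n * μ.im) := by
        simp [Zsqrtd.im_mul, Zsqrtd.re_star, Zsqrtd.im_star]
      rw [this] at him
      exact (dvd_neg.mp him)
    -- cancel g
    have hsum : μ.re ^ 2 + μ.im ^ 2 = g * (g * (a ^ 2 + b ^ 2)) := by rw [ha, hb]; ring
    have hdre : g * (a ^ 2 + b ^ 2) ∣ n * a := by
      have : g * (g * (a ^ 2 + b ^ 2)) ∣ g * (n * a) := by
        rw [← hsum]
        have : n * μ.re = g * (n * a) := by rw [ha]; ring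
        rwa [this] at hre'
      exact (mul_dvd_mul_iff_left hg0).mp this
    have hdim : g * (a ^ 2 + b ^ 2) ∣ n * b := by
      have : g * (g * (a ^ 2 + b ^ 2)) ∣ g * (n * b) := by
        rw [← hsum]
        have : n * μ.im = g * (n * b) := by rw [hb]; ring
        rwa [this] at him'
      exact (mul_dvd_mul_iff_left hg0).mp this
    have hgcd : g * (a ^ 2 + b ^ 2) ∣ (Int.gcd (n * a) (n * b) : ℤ) :=
      Int.dvd_coe_gcd hdre hdim
    rw [Int.gcd_mul_left, hab, mul_one] at hgcd
    rw [hnu]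
    exact (Int.dvd_natAbs).mp hgcd
  · rintro ⟨m, hm⟩
    -- μ ∣ ν(μ) as Gaussian integers
    have hdvdnu : μ ∣ ((nu μ : ℤ) : GaussianInt) := by
      refine ⟨⟨a, -b⟩, ?_⟩
      ext
      · simp only [Zsqrtd.re_intCast, Zsqrtd.re_mul, hnu, ha, hb]; ring
      · simp only [Zsqrtd.im_intCast, Zsqrtd.im_mul, ha, hb]; ring
    have : (n : GaussianInt) * δ = ((nu μ : ℤ) : GaussianInt) * ((m : GaussianInt) * δ) := by
      rw [hm]; push_cast; ring
    rw [this]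
    exact hdvdnu.mul_right _

/-- CRT existence over a finset of pairwise coprime moduli. -/
lemma crt_exists {r : ℕ} (ν : Fin r → ℤ) (c : Fin r → ℤ)
    (hcop : ∀ j j', j ≠ j' → IsCoprime (ν j) (ν j')) (s : Finset (Fin r)) :
    ∃ t : ℤ, ∀ j ∈ s, ν j ∣ t - c j := by
  induction s using Finset.induction with
  | empty => exact ⟨0, by simp⟩
  | @insert i s hi ih =>
    obtain ⟨t, ht⟩ := ih
    have hco : IsCoprime (ν i) (∏ j ∈ s, ν j) :=
      IsCoprime.prod_right fun j hj => hcop i j (by rintro rfl; exact hi hj)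
    obtain ⟨u, v, huv⟩ := hco
    set P : ℤ := ∏ j ∈ s, ν j with hP
    refine ⟨c i * (v * P) + t * (u * ν i), ?_⟩
    intro j hj
    rcases Finset.mem_insert.mp hj with rfl | hj
    · exact ⟨u * (t - c j), by linear_combination c j * huv⟩
    · have h1 : ν j ∣ (c i * (v * P) + t * (u * ν i)) - t := by
        have hPd : ν j ∣ P := Finset.dvd_prod_of_mem ν hj
        exact dvd_trans hPd ⟨v * (c i - t), by linear_combination t * huv⟩
      have := dvd_add h1 (ht j hj)
      have heq : ((c i * (v * P) + t * (u * ν i)) - t) + (t - c j) =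
          (c i * (v * P) + t * (u * ν i)) - c j := by ring
      rwa [heq] at this

theorem crt_for_gaussian_lines (α₀ δ : GaussianInt) (h : IsCoprime α₀ δ)
    (hδ : Int.gcd δ.re δ.im = 1) (r : ℕ) (μ : Fin r → GaussianInt)
    (hdiv : ∀ j, ∃ k : ℤ, μ j ∣ α₀ + (k : GaussianInt) * δ)
    (hpos : ∀ j, 0 < nu (μ j))
    (hcop : ∀ j j', j ≠ j' → IsCoprime (nu (μ j)) (nu (μ j')))
    (b : Fin r → ℤ) :
    ∃ t : ℤ, (∀ j, μ j ∣ α₀ + ((t + b j : ℤ) : GaussianInt) * δ) ∧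
      ∀ t' : ℤ, (∀ j, μ j ∣ α₀ + ((t' + b j : ℤ) : GaussianInt) * δ) →
        t' ≡ t [ZMOD ∏ j, nu (μ j)] := by
  choose k hk using hdiv
  -- characterization of membership
  have hiff : ∀ (j : Fin r) (m : ℤ),
      μ j ∣ α₀ + (m : GaussianInt) * δ ↔ nu (μ j) ∣ m - k j := by
    intro j m
    rw [← mu_dvd_iff α₀ δ h (μ j) (hpos j) (k j) (hk j)]
    constructor
    · intro hd
      have : ((m - k j : ℤ) : GaussianInt) * δ =
          (α₀ + (m : GaussianInt) * δ) - (α₀ + ((k j : ℤ) : GaussianInt) * δ) := by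
        push_cast; ring
      rw [this]
      exact dvd_sub hd (hk j)
    · intro hd
      have : α₀ + (m : GaussianInt) * δ =
          (α₀ + ((k j : ℤ) : GaussianInt) * δ) + ((m - k j : ℤ) : GaussianInt) * δ := by
        push_cast; ring
      rw [this]
      exact dvd_add (hk j) hd
  obtain ⟨t, ht⟩ := crt_exists (fun j => nu (μ j)) (fun j => k j - b j) hcop Finset.univ
  refine ⟨t, ?_, ?_⟩
  · intro j
    rw [hiff j (t + b j)]
    have heq : t + b j - k j = t - (k j - b j) := by ring
    rw [heq]
    exact ht j (Finset.mem_univ j)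
  · intro t' ht'
    have hall : ∀ j : Fin r, nu (μ j) ∣ t' - t := by
      intro j
      have h1 := (hiff j (t' + b j)).mp (ht' j)
      have h2 := ht j (Finset.mem_univ j)
      have heq : t' - t = (t' + b j - k j) - (t - (k j - b j)) := by ring
      rw [heq]
      exact dvd_sub h1 h2
    have hprod : (∏ j, nu (μ j)) ∣ t' - t := by
      apply Finset.prod_dvd_of_coprime
      · intro i _ j _ hij
        exact hcop i j hij
      · intro i _
        exact hall i
    exact (Int.modEq_iff_dvd.mpr hprod).symm
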